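/- Let f : ℝ → ℂ be (n+1)-times continuously differentiable on [a,b], and let the nodes be equally spaced: r_i = a + (i/n)(b-a) for i = 0,...,n. Then the Lagrange interpolant f_n satisfies max_{r∈[a,b]} |f(r) - f_n(r)| ≤ ((b-a)/n)^{n+1} · M / (4(n+1)), where M = max_{ξ∈[a,b]} |f^{(n+1)}(ξ)|. -/

import Mathlib

open Finset Set Polynomial

private lemma myIDW_nhds {F : Type*} [NormedAddCommGroup F] [NormedSpace ℝ F] {g : ℝ → F}
    {s : Set ℝ} {x : ℝ} (h : s ∈ nhds x) (n : ℕ) :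
    iteratedDerivWithin n g s x = iteratedDeriv n g x := by
  have hst : s =ᶠ[nhds x] (Set.univ : Set ℝ) := by
    rw [Filter.eventuallyEq_set]; filter_upwards [h] with y hy; simp [hy]
  rw [← iteratedDerivWithin_univ, iteratedDerivWithin_eq_iteratedFDerivWithin,
    iteratedDerivWithin_eq_iteratedFDerivWithin, iteratedFDerivWithin_congr_set hst]

private lemma myCLMcomp {F G : Type*} [NormedAddCommGroup F] [NormedSpace ℝ F]
    [NormedAddCommGroup G] [NormedSpace ℝ G] (L : F →L[ℝ] G) {g : ℝ → F} {s : Set ℝ} {x : ℝ}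
    {n : ℕ} (hg : ContDiffOn ℝ n g s) (hs : UniqueDiffOn ℝ s) (hx : x ∈ s) :
    iteratedDerivWithin n (fun y => L (g y)) s x = L (iteratedDerivWithin n g s x) := by
  simp only [iteratedDerivWithin_eq_iteratedFDerivWithin]
  rw [show (fun y => L (g y)) = (L ∘ g) from rfl,
    L.iteratedFDerivWithin_comp_left (hg x hx) hs hx le_rfl]
  rfl

private lemma polyIter (p : Polynomial ℝ) (k : ℕ) :
    iteratedDeriv k (fun x => p.eval x) = fun x => (derivative^[k] p).eval x := by
  induction k generalizing p with
  | zero => simp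
  | succ k ih =>
    rw [iteratedDeriv_succ']
    have : deriv (fun x => p.eval x) = fun x => (derivative p).eval x :=
      funext fun x => Polynomial.deriv p
    rw [this, ih, Function.iterate_succ_apply]

private lemma polyCD (p : Polynomial ℝ) (m : WithTop ℕ∞) : ContDiff ℝ m (fun x => p.eval x) := by
  induction p using Polynomial.induction_on' with
  | add p q hp hq => simpa using hp.add hq
  | monomial k c =>
    simpa [Polynomial.eval_monomial] using (contDiff_const (c := c)).mul (contDiff_id.pow k)

private lemma iterRolle : ∀ (k : ℕ) (g : ℝ → ℝ) (lo hi : ℝ) (x : Fin (k+2) → ℝ),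
    StrictMono x → (∀ i, x i ∈ Set.Icc lo hi) → (∀ i, g (x i) = 0) →
    ContinuousOn g (Set.Icc lo hi) → ContDiffOn ℝ k g (Set.Ioo lo hi) →
    ∃ ξ ∈ Set.Ioo lo hi, deriv^[k+1] g ξ = 0 := by
  intro k
  induction k with
  | zero =>
    intro g lo hi x hmono hmem hzero hcont _
    have h01 : x 0 < x 1 := hmono (by decide)
    obtain ⟨ξ, hξ, hd⟩ := exists_deriv_eq_zero h01
      (hcont.mono (Set.Icc_subset_Icc (hmem 0).1 (hmem 1).2))
      (by rw [hzero 0, hzero 1])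
    exact ⟨ξ, ⟨lt_of_le_of_lt (hmem 0).1 hξ.1, lt_of_lt_of_le hξ.2 (hmem 1).2⟩, by simpa using hd⟩
  | succ k ih =>
    intro g lo hi x hmono hmem hzero hcont hsm
    have step : ∀ i : Fin (k+2), ∃ cξ, cξ ∈ Set.Ioo (x i.castSucc) (x i.succ) ∧ deriv g cξ = 0 := by
      intro i
      obtain ⟨ξ, h1, h2⟩ := exists_deriv_eq_zero (hmono (Fin.castSucc_lt_succ (i := i)))
        (hcont.mono (Set.Icc_subset_Icc (hmem _).1 (hmem _).2))
        (by rw [hzero, hzero])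
      exact ⟨ξ, h1, h2⟩
    choose c hc hc0 using step
    have hcmono : StrictMono c := by
      intro i j hij
      calc c i < x i.succ := (hc i).2
        _ ≤ x j.castSucc := by
            apply hmono.monotone
            simp only [Fin.le_def, Fin.val_succ, Fin.coe_castSucc]
            exact hij
        _ < c j := (hc j).1
    have hcIoo : ∀ i, c i ∈ Set.Ioo lo hi := fun i =>
      ⟨lt_of_le_of_lt (hmem i.castSucc).1 (hc i).1, lt_of_lt_of_le (hc i).2 (hmem i.succ).2⟩
    have hsub : Set.Icc (c 0) (c (Fin.last (k+1))) ⊆ Set.Ioo lo hi :=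
      fun y hy => ⟨lt_of_lt_of_le (hcIoo 0).1 hy.1, lt_of_le_of_lt hy.2 (hcIoo _).2⟩
    have hderiv : ContDiffOn ℝ k (deriv g) (Set.Ioo lo hi) :=
      hsm.deriv_of_isOpen isOpen_Ioo (by exact_mod_cast le_rfl)
    obtain ⟨ξ, hξ, h0⟩ := ih (deriv g) (c 0) (c (Fin.last (k+1))) c hcmono
      (fun i => ⟨hcmono.monotone (Fin.zero_le i), hcmono.monotone (Fin.le_last i)⟩)
      hc0
      (hderiv.continuousOn.mono hsub)
      (hderiv.mono (fun y hy => hsub (Set.Ioo_subset_Icc_self hy)))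
    refine ⟨ξ, ⟨lt_trans (hcIoo 0).1 hξ.1, lt_trans hξ.2 (hcIoo _).2⟩, ?_⟩
    rw [Function.iterate_succ_apply]
    exact h0

private lemma prodShift : ∀ m : ℕ, ∏ j ∈ Finset.range m, (j + 2) = (m + 1).factorial := by
  intro m
  induction m with
  | zero => simp
  | succ m ih =>
    rw [Finset.prod_range_succ, ih, show m + 1 + 1 = (m + 1) + 1 from rfl,
      Nat.factorial_succ (m+1), mul_comm]

private lemma factNF : ∀ n k : ℕ, k + 1 ≤ n → (k+1).factorial * (n - k).factorial ≤ n.factorial := by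
  intro n
  induction n with
  | zero => omega
  | succ n ih =>
    intro k h
    by_cases h' : k + 1 ≤ n
    · have h1 : n + 1 - k = (n - k) + 1 := by omega
      have h2 := ih k h'
      calc (k+1).factorial * ((n+1) - k).factorial
          = (n - k + 1) * ((k+1).factorial * (n - k).factorial) := by
            rw [h1, Nat.factorial_succ (n - k)]; ring
        _ ≤ (n - k + 1) * n.factorial := Nat.mul_le_mul_left _ h2
        _ ≤ (n + 1) * n.factorial := Nat.mul_le_mul_right _ (by omega)
        _ = (n+1).factorial := (Nat.factorial_succ n).symm
    · have hk : k = n := by omega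
      subst hk
      simp [Nat.factorial]

private lemma KP (n k : ℕ) (hkn : k + 1 ≤ n) (t : ℝ) (hk : (k : ℝ) ≤ t) (hk1 : t ≤ (k : ℝ) + 1) :
    ∏ j ∈ Finset.range (n+1), |t - (j : ℝ)| ≤ (n.factorial : ℝ) / 4 := by
  have hsplit : ∏ j ∈ Finset.range (n+1), |t - (j : ℝ)| =
      (∏ j ∈ Finset.range k, |t - (j : ℝ)|) * |t - (k : ℝ)| * |t - ((k:ℝ)+1)| *
        ∏ j ∈ Finset.Ico (k+2) (n+1), |t - (j : ℝ)| := by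
    rw [Finset.range_eq_Ico, ← Finset.prod_Ico_consecutive (fun j => |t - (j:ℝ)|)
      (Nat.zero_le (k+2)) (by omega), ← Finset.range_eq_Ico]
    rw [Finset.prod_range_succ, Finset.prod_range_succ]
    push_cast
    ring
  rw [hsplit]
  have hA : ∏ j ∈ Finset.range k, |t - (j : ℝ)| ≤ ((k+1).factorial : ℝ) := by
    have h1 : ∏ j ∈ Finset.range k, |t - (j : ℝ)| ≤ ∏ j ∈ Finset.range k, ((k : ℝ) + 1 - j) := by
      apply Finset.prod_le_prod (fun j _ => abs_nonneg _)
      intro j hj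
      have hjk : (j : ℝ) ≤ k := by
        exact_mod_cast Nat.le_of_lt (Finset.mem_range.1 hj)
      rw [abs_of_nonneg (by linarith)]
      linarith
    have h2 : ∏ j ∈ Finset.range k, ((k : ℝ) + 1 - j) = ((k+1).factorial : ℝ) := by
      have : ∏ j ∈ Finset.range k, ((k : ℝ) + 1 - j) = ((∏ j ∈ Finset.range k, (k + 1 - j) : ℕ) : ℝ) := by
        rw [Nat.cast_prod]
        apply Finset.prod_congr rfl
        intro j hj
        have := Finset.mem_range.1 hj
        push_cast [Nat.cast_sub (by omega : j ≤ k + 1)]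
        ring
      rw [this]
      norm_cast
      rw [← Finset.prod_range_reflect (fun j => k + 1 - j) k]
      rw [Finset.prod_congr rfl (fun j hj => show k + 1 - (k - 1 - j) = j + 2 by
        have := Finset.mem_range.1 hj; omega)]
      exact prodShift k
    linarith
  have hB : |t - (k : ℝ)| * |t - ((k:ℝ)+1)| ≤ 1/4 := by
    rw [abs_of_nonneg (by linarith), abs_of_nonpos (by linarith)]
    nlinarith [sq_nonneg (t - (k:ℝ) - 1/2)]
  have hC : ∏ j ∈ Finset.Ico (k+2) (n+1), |t - (j : ℝ)| ≤ ((n - k).factorial : ℝ) := by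
    have h1 : ∏ j ∈ Finset.Ico (k+2) (n+1), |t - (j : ℝ)| ≤
        ∏ j ∈ Finset.Ico (k+2) (n+1), ((j : ℝ) - k) := by
      apply Finset.prod_le_prod (fun j _ => abs_nonneg _)
      intro j hj
      have hjk : (k : ℝ) + 2 ≤ j := by exact_mod_cast (Finset.mem_Ico.1 hj).1
      rw [abs_of_nonpos (by linarith)]
      linarith
    have h2 : ∏ j ∈ Finset.Ico (k+2) (n+1), ((j : ℝ) - k) = ((n - k).factorial : ℝ) := by
      rw [Finset.prod_Ico_eq_prod_range]
      have : ∏ j ∈ Finset.range (n + 1 - (k+2)), ((k + 2 + j : ℕ) - (k:ℝ)) =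
          ((∏ j ∈ Finset.range (n - k - 1), (j + 2) : ℕ) : ℝ) := by
        rw [Nat.cast_prod, show n + 1 - (k+2) = n - k - 1 by omega]
        apply Finset.prod_congr rfl
        intro j _
        push_cast
        ring
      rw [this, prodShift (n - k - 1), show n - k - 1 + 1 = n - k by omega]
    linarith
  have hfour := factNF n k hkn
  have hprodA : (0:ℝ) ≤ ∏ j ∈ Finset.range k, |t - (j : ℝ)| :=
    Finset.prod_nonneg (fun j _ => abs_nonneg _)
  have hprodC : (0:ℝ) ≤ ∏ j ∈ Finset.Ico (k+2) (n+1), |t - (j : ℝ)| :=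
    Finset.prod_nonneg (fun j _ => abs_nonneg _)
  calc (∏ j ∈ Finset.range k, |t - (j : ℝ)|) * |t - (k : ℝ)| * |t - ((k:ℝ)+1)| *
        ∏ j ∈ Finset.Ico (k+2) (n+1), |t - (j : ℝ)|
      = ((∏ j ∈ Finset.range k, |t - (j : ℝ)|) * (∏ j ∈ Finset.Ico (k+2) (n+1), |t - (j : ℝ)|)) *
          (|t - (k : ℝ)| * |t - ((k:ℝ)+1)|) := by ring
    _ ≤ (((k+1).factorial : ℝ) * ((n - k).factorial : ℝ)) * (1/4) := by
        apply mul_le_mul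
        · exact mul_le_mul hA hC hprodC (Nat.cast_nonneg _)
        · exact hB
        · positivity
        · positivity
    _ ≤ (n.factorial : ℝ) * (1/4) := by
        apply mul_le_mul_of_nonneg_right _ (by norm_num)
        exact_mod_cast hfour
    _ = (n.factorial : ℝ) / 4 := by ring

/-- Uniform-sampling Lagrange interpolation error bound with equally spaced nodes. -/
theorem lagrange_error_bound_equispaced (n : ℕ) (hn : 0 < n) (a b : ℝ) (hab : a < b)
    (f : ℝ → ℂ) (hf : ContDiffOn ℝ (n + 1) f (Set.Icc a b))
    (nodes : Fin (n + 1) → ℝ)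
    (hnodes : ∀ i : Fin (n + 1), nodes i = a + ((i : ℝ) / n) * (b - a))
    (fn : ℝ → ℂ)
    (hfn : ∀ r, fn r = ∑ j, f (nodes j) *
      ((∏ m ∈ Finset.univ.filter (· ≠ j), (r - nodes m) / (nodes j - nodes m) : ℝ) : ℂ))
    (M : ℝ)
    (hM : ∀ ξ ∈ Set.Icc a b, ‖iteratedDerivWithin (n + 1) f (Set.Icc a b) ξ‖ ≤ M) :
    ∀ r ∈ Set.Icc a b,
      ‖f r - fn r‖ ≤ ((b - a) / n) ^ (n + 1) * M / (4 * (n + 1)) := by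
  intro r hr
  have hnR : (0:ℝ) < n := by exact_mod_cast hn
  set hstep : ℝ := (b - a) / n with hstep_def
  have hh : 0 < hstep := div_pos (by linarith) hnR
  have hnodes' : ∀ i : Fin (n + 1), nodes i = a + (i : ℝ) * hstep := by
    intro i; rw [hnodes i, hstep_def]; ring
  have hmono : StrictMono nodes := by
    intro i j hij
    rw [hnodes' i, hnodes' j]
    have : (i : ℝ) < (j : ℝ) := by exact_mod_cast hij
    nlinarith
  have hinj := hmono.injective
  have hmem : ∀ i, nodes i ∈ Set.Icc a b := by
    intro i
    rw [hnodes' i]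
    constructor
    · nlinarith [Nat.cast_nonneg (α := ℝ) (i : ℕ)]
    · have hi : ((i : ℕ) : ℝ) ≤ n := by exact_mod_cast Nat.lt_succ_iff.1 i.isLt
      have : (i:ℝ) * hstep ≤ n * hstep := by nlinarith
      have hb : a + n * hstep = b := by rw [hstep_def]; field_simp; ring
      linarith
  have hM0 : 0 ≤ M := le_trans (norm_nonneg _) (hM a ⟨le_refl a, le_of_lt hab⟩)
  have hfn_node : ∀ i, fn (nodes i) = f (nodes i) := by
    intro i
    rw [hfn]
    rw [Finset.sum_eq_single i]
    · have h1 : ∏ m ∈ Finset.univ.filter (· ≠ i), (nodes i - nodes m) / (nodes i - nodes m) = 1 :=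
        Finset.prod_eq_one (fun m hm =>
          div_self (sub_ne_zero.2 (fun hc => (Finset.mem_filter.1 hm).2 (hinj hc).symm)))
      rw [h1]
      simp
    · intro j _ hji
      have hmem0 : i ∈ Finset.univ.filter (· ≠ j) :=
        Finset.mem_filter.2 ⟨Finset.mem_univ _, Ne.symm hji⟩
      rw [Finset.prod_eq_zero hmem0 (by simp)]
      simp
    · simp
  -- Part II : remainder bound
  have key : ‖f r - fn r‖ ≤ (∏ j, |r - nodes j|) * M / ((n+1).factorial : ℝ) := by
    have hRHS0 : (0:ℝ) ≤ (∏ j, |r - nodes j|) * M / ((n+1).factorial : ℝ) :=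
      div_nonneg (mul_nonneg (Finset.prod_nonneg fun j _ => abs_nonneg _) hM0) (by positivity)
    by_cases hrn : ∃ i, r = nodes i
    · obtain ⟨i, rfl⟩ := hrn
      rw [hfn_node i, sub_self, norm_zero]
      exact hRHS0
    push_neg at hrn
    set E : ℂ := f r - fn r with hE_def
    by_cases hE0 : E = 0
    · rw [hE0, norm_zero]
      exact hRHS0
    have hEnorm : (0:ℝ) < ‖E‖ := norm_pos_iff.2 hE0
    have hEnorm' : (‖E‖ : ℂ) ≠ 0 := Complex.ofReal_ne_zero.2 (ne_of_gt hEnorm)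
    set c : ℂ := (starRingEnd ℂ) E / (‖E‖ : ℂ) with hc_def
    have hcE : c * E = ((‖E‖ : ℝ) : ℂ) := by
      rw [hc_def, div_mul_eq_mul_div, mul_comm ((starRingEnd ℂ) E) E, Complex.mul_conj]
      rw [show (Complex.normSq E : ℂ) = ((‖E‖:ℝ):ℂ) * ((‖E‖:ℝ):ℂ) by
        norm_cast
        rw [Complex.normSq_eq_norm_sq, sq]]
      rw [mul_div_assoc, div_self hEnorm', mul_one]
    have hcnorm : ‖c‖ = 1 := by
      rw [hc_def, norm_div, RCLike.norm_conj, Complex.norm_real, Real.norm_eq_abs,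
        abs_of_pos hEnorm, div_self (ne_of_gt hEnorm)]
    set L : ℂ →L[ℝ] ℝ :=
      Complex.reCLM.comp ((c • ContinuousLinearMap.id ℂ ℂ).restrictScalars ℝ) with hL_def
    have hL : ∀ z : ℂ, L z = (c * z).re := by
      intro z
      simp [hL_def, smul_eq_mul]
    set Wp : Polynomial ℝ := ∏ i : Fin (n+1), (Polynomial.X - Polynomial.C (nodes i))
      with hWp_def
    have hWeval : ∀ x : ℝ, Wp.eval x = ∏ i, (x - nodes i) := by
      intro x
      simp [hWp_def, Polynomial.eval_prod]
    have hWr : Wp.eval r ≠ 0 := by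
      rw [hWeval]
      exact Finset.prod_ne_zero_iff.2 fun i _ => sub_ne_zero.2 (hrn i)
    set K : ℝ := ‖E‖ / Wp.eval r with hK_def
    set Lp : Fin (n+1) → Polynomial ℝ := fun j => ∏ m ∈ Finset.univ.filter (· ≠ j),
      (Polynomial.C ((nodes j - nodes m)⁻¹) * (Polynomial.X - Polynomial.C (nodes m))) with hLp_def
    have hLpeval : ∀ j x, (Lp j).eval x =
        ∏ m ∈ Finset.univ.filter (· ≠ j), (x - nodes m) / (nodes j - nodes m) := by
      intro j x
      simp only [hLp_def, Polynomial.eval_prod, Polynomial.eval_mul, Polynomial.eval_C,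
        Polynomial.eval_sub, Polynomial.eval_X]
      exact Finset.prod_congr rfl fun m _ => by rw [div_eq_mul_inv, mul_comm]
    set Q : Polynomial ℝ := (∑ j, Polynomial.C ((c * f (nodes j)).re) * Lp j) +
      Polynomial.C K * Wp with hQ_def
    have hQeval : ∀ x, Q.eval x = (c * fn x).re + K * Wp.eval x := by
      intro x
      have h1 : (c * fn x).re = ∑ j, (c * f (nodes j)).re *
          (∏ m ∈ Finset.univ.filter (· ≠ j), (x - nodes m) / (nodes j - nodes m)) := by
        rw [hfn x, Finset.mul_sum, Complex.re_sum]
        apply Finset.sum_congr rfl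
        intro j _
        rw [← mul_assoc, Complex.mul_re, Complex.ofReal_re, Complex.ofReal_im, mul_zero, sub_zero]
      have hQx : Q.eval x = (∑ j, (c * f (nodes j)).re * (Lp j).eval x) + K * Wp.eval x := by
        simp [hQ_def, Polynomial.eval_finset_sum]
      rw [hQx, h1]
      congr 1
      exact Finset.sum_congr rfl fun j _ => by rw [hLpeval]
    set g : ℝ → ℝ := fun x => L (f x) - Q.eval x with hg_def
    have hg_node : ∀ i, g (nodes i) = 0 := by
      intro i
      have hW0 : Wp.eval (nodes i) = 0 := by
        rw [hWeval]
        exact Finset.prod_eq_zero (Finset.mem_univ i) (sub_self _)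
      show L (f (nodes i)) - Q.eval (nodes i) = 0
      rw [hL, hQeval, hfn_node i, hW0]
      ring
    have hgr : g r = 0 := by
      show L (f r) - Q.eval r = 0
      rw [hL, hQeval r]
      have hKW : K * Wp.eval r = ‖E‖ := by
        rw [hK_def]
        field_simp
      rw [hKW]
      have hsplit : (c * f r).re - ((c * fn r).re + ‖E‖) = (c * (f r - fn r)).re - ‖E‖ := by
        rw [mul_sub, Complex.sub_re]
        ring
      rw [hsplit, ← hE_def, hcE]
      simp
    have hu : ContDiffOn ℝ (n+1) (fun x => L (f x)) (Set.Icc a b) :=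
      hf.continuousLinearMap_comp L
    have hgC : ContDiffOn ℝ (n+1) g (Set.Icc a b) := hu.sub ((polyCD Q _).contDiffOn)
    have hgIoo : ContDiffOn ℝ (n:ℕ) g (Set.Ioo a b) :=
      (hgC.of_le le_self_add).mono Set.Ioo_subset_Icc_self
    set sz : Finset ℝ := insert r (Finset.image nodes Finset.univ) with hs_def
    have hrns : r ∉ Finset.image nodes Finset.univ := by
      simp only [Finset.mem_image, Finset.mem_univ, true_and, not_exists]
      intro i hi
      exact hrn i hi.symm
    have hcard : sz.card = n + 2 := by
      rw [hs_def, Finset.card_insert_of_notMem hrns, Finset.card_image_of_injective _ hinj,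
        Finset.card_univ, Fintype.card_fin]
    have hsprop : ∀ y ∈ sz, y ∈ Set.Icc a b ∧ g y = 0 := by
      intro y hy
      rw [hs_def, Finset.mem_insert] at hy
      rcases hy with rfl | hy
      · exact ⟨hr, hgr⟩
      · obtain ⟨i, _, rfl⟩ := Finset.mem_image.1 hy
        exact ⟨hmem i, hg_node i⟩
    have hxmem : ∀ i : Fin (n+2), (sz.orderEmbOfFin hcard i) ∈ sz :=
      fun i => Finset.orderEmbOfFin_mem sz hcard i
    obtain ⟨ξ, hξ, hder0⟩ := iterRolle n g a b (fun i => sz.orderEmbOfFin hcard i)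
      (sz.orderEmbOfFin hcard).strictMono
      (fun i => (hsprop _ (hxmem i)).1) (fun i => (hsprop _ (hxmem i)).2)
      hgC.continuousOn hgIoo
    have hioo_nhds : Set.Ioo a b ∈ nhds ξ := isOpen_Ioo.mem_nhds hξ
    have hicc_nhds : Set.Icc a b ∈ nhds ξ := Filter.mem_of_superset hioo_nhds Set.Ioo_subset_Icc_self
    have hUD : UniqueDiffOn ℝ (Set.Ioo a b) := isOpen_Ioo.uniqueDiffOn
    have huIoo : ContDiffOn ℝ ((n+1 : ℕ) : WithTop ℕ∞) (fun x => L (f x)) (Set.Ioo a b) := by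
      exact_mod_cast hu.mono Set.Ioo_subset_Icc_self
    have hfIoo : ContDiffOn ℝ ((n+1 : ℕ) : WithTop ℕ∞) f (Set.Ioo a b) := by
      exact_mod_cast hf.mono Set.Ioo_subset_Icc_self
    have e2 : iteratedDerivWithin (n+1) g (Set.Ioo a b) ξ =
        iteratedDerivWithin (n+1) (fun x => L (f x)) (Set.Ioo a b) ξ -
        iteratedDerivWithin (n+1) (fun x => Q.eval x) (Set.Ioo a b) ξ :=
      iteratedDerivWithin_sub hξ hUD (huIoo ξ hξ) ((polyCD Q _).contDiffWithinAt)
    have e3 : iteratedDerivWithin (n+1) (fun x => L (f x)) (Set.Ioo a b) ξ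
        = L (iteratedDerivWithin (n+1) f (Set.Ioo a b) ξ) :=
      myCLMcomp L hfIoo hUD hξ
    have e4 : iteratedDerivWithin (n+1) f (Set.Ioo a b) ξ
        = iteratedDerivWithin (n+1) f (Set.Icc a b) ξ := by
      rw [myIDW_nhds hioo_nhds, myIDW_nhds hicc_nhds]
    -- polynomial degree bookkeeping
    have hLpdeg : ∀ j, (Lp j).natDegree ≤ n := by
      intro j
      refine (Polynomial.natDegree_prod_le _ _).trans ?_
      have hone : ∀ m ∈ Finset.univ.filter (· ≠ j),
          (Polynomial.C ((nodes j - nodes m)⁻¹) * (Polynomial.X - Polynomial.C (nodes m))).natDegree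
            ≤ 1 :=
        fun m _ => (Polynomial.natDegree_C_mul_le _ _).trans (Polynomial.natDegree_X_sub_C_le _)
      refine (Finset.sum_le_sum hone).trans ?_
      rw [Finset.sum_const, Finset.filter_ne', Finset.card_erase_of_mem (Finset.mem_univ j),
        Finset.card_univ, Fintype.card_fin]
      simp
    have hsumdeg : (∑ j, Polynomial.C ((c * f (nodes j)).re) * Lp j).natDegree ≤ n :=
      Polynomial.natDegree_sum_le_of_forall_le _ _
        (fun j _ => (Polynomial.natDegree_C_mul_le _ _).trans (hLpdeg j))
    have hWmonic : Wp.Monic :=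
      Polynomial.monic_prod_of_monic _ _ (fun i _ => Polynomial.monic_X_sub_C _)
    have hWdeg : Wp.natDegree = n + 1 := by
      rw [hWp_def, Polynomial.natDegree_prod_of_monic _ _ (fun i _ => Polynomial.monic_X_sub_C _)]
      simp [Polynomial.natDegree_X_sub_C]
    have hQdeg : Q.natDegree ≤ n + 1 :=
      (Polynomial.natDegree_add_le _ _).trans
        (max_le (hsumdeg.trans (Nat.le_succ n))
          ((Polynomial.natDegree_C_mul_le _ _).trans hWdeg.le))
    have hQcoeff : Q.coeff (n+1) = K := by
      rw [hQ_def, Polynomial.coeff_add, Polynomial.coeff_C_mul,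
        Polynomial.coeff_eq_zero_of_natDegree_lt (lt_of_le_of_lt hsumdeg (Nat.lt_succ_self n)),
        show Wp.coeff (n+1) = 1 from by rw [← hWdeg]; exact hWmonic.coeff_natDegree]
      ring
    have hd0 : (derivative^[n+1] Q).natDegree = 0 :=
      Nat.eq_zero_of_le_zero ((Polynomial.natDegree_iterate_derivative _ _).trans (by omega))
    have hQC : derivative^[n+1] Q = Polynomial.C (((n+1).factorial : ℝ) * K) := by
      rw [Polynomial.eq_C_of_natDegree_le_zero hd0.le]
      rw [Polynomial.coeff_iterate_derivative, zero_add, hQcoeff, Nat.descFactorial_self,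
        nsmul_eq_mul]
    have e5 : iteratedDerivWithin (n+1) (fun x => Q.eval x) (Set.Ioo a b) ξ
        = ((n+1).factorial : ℝ) * K := by
      rw [myIDW_nhds hioo_nhds, polyIter, hQC]
      simp
    have hzero' : iteratedDerivWithin (n+1) g (Set.Ioo a b) ξ = 0 := by
      rw [myIDW_nhds hioo_nhds, iteratedDeriv_eq_iterate]
      exact hder0
    set Fξ : ℂ := iteratedDerivWithin (n+1) f (Set.Icc a b) ξ with hFξ_def
    have hmain : L Fξ = ((n+1).factorial : ℝ) * K := by
      have h := hzero'
      rw [e2, e3, e4, e5] at h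
      linarith
    have hre : (c * Fξ).re = ((n+1).factorial : ℝ) * K := by
      rw [← hL]
      exact hmain
    have hFbd : ‖Fξ‖ ≤ M := hM ξ (Set.Ioo_subset_Icc_self hξ)
    have hrebd : |(c * Fξ).re| ≤ M := by
      calc |(c * Fξ).re| ≤ ‖c * Fξ‖ := Complex.abs_re_le_norm _
        _ = ‖c‖ * ‖Fξ‖ := norm_mul _ _
        _ ≤ M := by rw [hcnorm, one_mul]; exact hFbd
    have hfactne : ((n+1).factorial : ℝ) ≠ 0 := by positivity
    have hEeq : ‖E‖ = (c * Fξ).re * Wp.eval r / ((n+1).factorial : ℝ) := by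
      rw [hre, hK_def]
      field_simp
    have hWabs : |Wp.eval r| = ∏ j, |r - nodes j| := by
      rw [hWeval]
      exact Finset.abs_prod _ _
    calc ‖E‖ = (c * Fξ).re * Wp.eval r / ((n+1).factorial : ℝ) := hEeq
      _ ≤ |(c * Fξ).re * Wp.eval r / ((n+1).factorial : ℝ)| := le_abs_self _
      _ = |(c * Fξ).re| * |Wp.eval r| / ((n+1).factorial : ℝ) := by
          rw [abs_div, abs_mul, Nat.abs_cast]
      _ ≤ M * (∏ j, |r - nodes j|) / ((n+1).factorial : ℝ) := by
          rw [hWabs]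
          have hprodnn : (0:ℝ) ≤ ∏ j, |r - nodes j| :=
            Finset.prod_nonneg fun j _ => abs_nonneg _
          gcongr
      _ = (∏ j, |r - nodes j|) * M / ((n+1).factorial : ℝ) := by ring
  -- Part I : product bound
  have hprodbd : (∏ j, |r - nodes j|) ≤ (n.factorial : ℝ) / 4 * hstep^(n+1) := by
    set t : ℝ := (r - a) / hstep with ht_def
    have htr : r = a + t * hstep := by rw [ht_def]; field_simp; ring
    have ht0 : 0 ≤ t := by
      rw [ht_def]
      apply div_nonneg _ (le_of_lt hh)
      linarith [hr.1]
    have hb' : a + n * hstep = b := by rw [hstep_def]; field_simp; ring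
    have htn : t ≤ n := by
      rw [ht_def, div_le_iff₀ hh]
      linarith [hr.2]
    have hfac : ∀ j : Fin (n+1), |r - nodes j| = hstep * |t - ((j:ℕ):ℝ)| := by
      intro j
      rw [hnodes' j, htr, show a + t*hstep - (a + ((j:ℕ):ℝ)*hstep) = hstep * (t - ((j:ℕ):ℝ)) by ring,
        abs_mul, abs_of_pos hh]
    rw [Finset.prod_congr rfl (fun j _ => hfac j), Finset.prod_mul_distrib, Finset.prod_const,
      Finset.card_univ, Fintype.card_fin]
    have hfin : ∏ j : Fin (n+1), |t - ((j:ℕ):ℝ)| = ∏ j ∈ Finset.range (n+1), |t - (j:ℝ)| :=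
      Fin.prod_univ_eq_prod_range (fun j => |t - (j:ℝ)|) (n+1)
    rw [hfin]
    set k := min (n-1) (Nat.floor t) with hk_def
    have hkmin1 := min_le_left (n-1) (Nat.floor t)
    have hkmin2 := min_le_right (n-1) (Nat.floor t)
    have hkn : k + 1 ≤ n := by omega
    have hk_le : (k:ℝ) ≤ t := le_trans (Nat.cast_le.2 hkmin2) (Nat.floor_le ht0)
    have hk1 : t ≤ (k:ℝ) + 1 := by
      by_cases hc : Nat.floor t ≤ n - 1
      · have hkval : k = Nat.floor t := by omega
        rw [hkval]
        exact le_of_lt (Nat.lt_floor_add_one t)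
      · have hkval : k = n - 1 := by omega
        rw [hkval]
        have hcast : ((n-1:ℕ):ℝ) + 1 = (n:ℝ) := by
          rw [Nat.cast_sub hn]
          ring
        rw [hcast]
        exact htn
    have hKP := KP n k hkn t hk_le hk1
    rw [mul_comm]
    exact mul_le_mul_of_nonneg_right hKP (le_of_lt (pow_pos hh (n+1)))
  -- combine
  have hfactpos : (0:ℝ) < ((n+1).factorial : ℝ) := by exact_mod_cast (n+1).factorial_pos
  calc ‖f r - fn r‖ ≤ (∏ j, |r - nodes j|) * M / ((n+1).factorial : ℝ) := key
    _ ≤ ((n.factorial : ℝ) / 4 * hstep^(n+1)) * M / ((n+1).factorial : ℝ) := by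
        gcongr
    _ = hstep ^ (n + 1) * M / (4 * (n + 1)) := by
        rw [Nat.factorial_succ]
        have h1 : (n.factorial : ℝ) ≠ 0 := by exact_mod_cast n.factorial_ne_zero
        have h2 : ((n:ℝ) + 1) ≠ 0 := by positivity
        push_cast
        field_simp
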